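/- Let X be a locally compact Hausdorff space and let S be a subset of Homeo(X) whose closure in the compact-open topology is compact. Then S is equicontinuous with respect to every uniformity compatible with the topology of X. -/

import Mathlib

open Topology

/-- The compact-open topology on the self-homeomorphisms of `X`, induced from the
compact-open topology on continuous maps `C(X, X)`. -/
noncomputable def homeoCompactOpen (X : Type*) [TopologicalSpace X] :
    TopologicalSpace (X ≃ₜ X) :=
  TopologicalSpace.induced (fun h => (h : C(X, X))) ContinuousMap.compactOpen

/-- Let `X` be a locally compact Hausdorff space and `S` a set of self-homeomorphisms of `X`
whose closure in the compact-open topology is compact.  Then `S` is equicontinuous with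
respect to every uniformity compatible with the topology of `X`. -/
theorem compact_closure_homeo_equicontinuous {X : Type*} [TopologicalSpace X]
    [LocallyCompactSpace X] [T2Space X] (S : Set (X ≃ₜ X))
    (hS : @IsCompact _ (homeoCompactOpen X) (@closure _ (homeoCompactOpen X) S))
    (u : UniformSpace X) (hu : u.toTopologicalSpace = ‹TopologicalSpace X›) :
    ∀ E ∈ @uniformity X u, ∀ x : X, ∃ U ∈ 𝓝 x, ∀ s ∈ S, ∀ y ∈ U, (s x, s y) ∈ E := by
  letI : TopologicalSpace (X ≃ₜ X) := homeoCompactOpen X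
  intro E hE x
  obtain ⟨F, hF, hFsymm, hFE⟩ := comp_symm_mem_uniformity_sets hE
  -- The image of the closure of `S` in `C(X, X)` is compact.
  have hcont : Continuous (fun h : X ≃ₜ X => (h : C(X, X))) := continuous_induced_dom
  set T : Set C(X, X) := (fun h : X ≃ₜ X => (h : C(X, X))) '' (@closure _ (homeoCompactOpen X) S)
    with hTdef
  have hT : IsCompact T := hS.image hcont
  -- Evaluation is continuous on `C(X, X) × X`.
  have hev : Continuous fun p : C(X, X) × X => p.1 p.2 := continuous_eval
  -- For each `f`, find neighborhoods `V f` of `f` and `U f` of `x` controlling evaluation.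
  have key : ∀ f : C(X, X), ∃ V ∈ 𝓝 f, ∃ U ∈ 𝓝 x,
      ∀ g ∈ V, ∀ y ∈ U, (f x, g y) ∈ F := by
    intro f
    have hball : {z : X | (f x, z) ∈ F} ∈ 𝓝 (f x) := by
      have := @UniformSpace.ball_mem_nhds X u (f x) F hF
      rwa [hu] at this
    have hpre : {p : C(X, X) × X | (f x, p.1 p.2) ∈ F} ∈ 𝓝 (f, x) :=
      hev.continuousAt (x := (f, x)) hball
    rcases mem_nhds_prod_iff.mp hpre with ⟨V, hV, U, hU, hVU⟩
    exact ⟨V, hV, U, hU, fun g hg y hy => hVU (Set.mk_mem_prod hg hy)⟩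
  choose V hV U hU hVU using key
  -- Cover the compact set `T` by finitely many `V f`.
  obtain ⟨t, htcover⟩ := hT.elim_nhds_subcover' (fun f _ => V f) (fun f _ => hV f)
  refine ⟨⋂ f ∈ t, U ↑f, (Filter.biInter_finset_mem t).mpr fun f _ => hU ↑f, ?_⟩
  intro s hsS y hy
  have hsT : (s : C(X, X)) ∈ T := ⟨s, subset_closure hsS, rfl⟩
  rcases Set.mem_iUnion₂.mp (htcover hsT) with ⟨f, hf, hsf⟩
  have hxU : x ∈ U ↑f := mem_of_mem_nhds (hU ↑f)
  have hyU : y ∈ U ↑f := Set.mem_iInter₂.mp hy f hf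
  have h1 : ((f : C(X, X)) x, (s : C(X, X)) x) ∈ F := hVU ↑f _ hsf x hxU
  have h2 : ((f : C(X, X)) x, (s : C(X, X)) y) ∈ F := hVU ↑f _ hsf y hyU
  exact hFE ⟨(f : C(X, X)) x, hFsymm.symm _ _ h1, h2⟩
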